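/- Let 0<q<1 and let m, n, k be integers with m ≥ 1, n ≥ 1, k ≥ 0. Define A(m,n,k) := Σ_{b_1>b_2>...>b_n>k} (q^{m+b_1}/[m+b_1]_q) ∏_{j=1}^n 1/[b_j]_q, the sum being over all n-tuples of integers b_1 > b_2 > ... > b_n > k. Then A(m,n,k) = (q^m/[m]_q) Σ_{m ≥ c_1 ≥ c_2 ≥ ... ≥ c_n ≥ 1} (q^{c_n+k}/[c_n+k]_q) ∏_{j=1}^{n-1} q^{c_j}/[c_j]_q, where the sum on the right is over all weakly decreasing n-tuples of integers c_1,...,c_n with m ≥ c_1 ≥ ... ≥ c_n ≥ 1. -/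

import Mathlib

/-- The `q`-analog of a natural number: `[k]_q = (1-q^k)/(1-q)`. -/
noncomputable def qnum (q : ℝ) (k : ℕ) : ℝ := (1 - q ^ k) / (1 - q)

open Finset ENNReal

section Helpers

lemma qnum_pos {q : ℝ} (hq0 : 0 < q) (hq1 : q < 1) {j : ℕ} (hj : 1 ≤ j) : 0 < qnum q j := by
  have h1 : q ^ j < 1 := pow_lt_one₀ hq0.le hq1 (by omega)
  exact div_pos (by linarith) (by linarith)

lemma qnum_nonneg {q : ℝ} (hq0 : 0 < q) (hq1 : q < 1) (j : ℕ) : 0 ≤ qnum q j := by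
  rcases Nat.eq_zero_or_pos j with rfl | hj
  · simp [qnum]
  · exact (qnum_pos hq0 hq1 hj).le

lemma one_le_qnum {q : ℝ} (hq0 : 0 < q) (hq1 : q < 1) {j : ℕ} (hj : 1 ≤ j) : 1 ≤ qnum q j := by
  rw [qnum, le_div_iff₀ (by linarith)]
  have : q ^ j ≤ q ^ 1 := pow_le_pow_of_le_one hq0.le hq1.le hj
  simp only [pow_one] at this; nlinarith

lemma key_real {q : ℝ} (hq0 : 0 < q) (hq1 : q < 1) {b m : ℕ} (hb : 1 ≤ b) (hm : 1 ≤ m) :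
    (1 / qnum q b) * (q ^ (m + b) / qnum q (m + b))
      = (q ^ m / qnum q m) * (q ^ b / qnum q b - q ^ (m + b) / qnum q (m + b)) := by
  have h1 : (1:ℝ) - q ^ b ≠ 0 := by
    have : q ^ b < 1 := pow_lt_one₀ hq0.le hq1 (by omega); linarith
  have h2 : (1:ℝ) - q ^ m ≠ 0 := by
    have : q ^ m < 1 := pow_lt_one₀ hq0.le hq1 (by omega); linarith
  have h3 : (1:ℝ) - q ^ m * q ^ b ≠ 0 := by
    have : q ^ (m+b) < 1 := pow_lt_one₀ hq0.le hq1 (by omega)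
    rw [pow_add] at this; linarith
  have hq : (1:ℝ) - q ≠ 0 := by linarith
  have h3' : (1:ℝ) - q ^ b * q ^ m ≠ 0 := by rwa [mul_comm]
  simp only [qnum, pow_add]
  field_simp
  ring

/-- `u q a = q^a/[a]` as a real. -/
noncomputable def uR (q : ℝ) (a : ℕ) : ℝ := q ^ a / qnum q a

lemma uR_nonneg {q : ℝ} (hq0 : 0 < q) (hq1 : q < 1) (a : ℕ) : 0 ≤ uR q a :=
  div_nonneg (pow_nonneg hq0.le a) (qnum_nonneg hq0 hq1 a)

lemma uR_le {q : ℝ} (hq0 : 0 < q) (hq1 : q < 1) (a : ℕ) : uR q a ≤ q ^ a := by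
  rcases Nat.eq_zero_or_pos a with rfl | ha
  · simp [uR, qnum]
  · exact div_le_self (pow_nonneg hq0.le a) (one_le_qnum hq0 hq1 ha)

lemma summable_uR {q : ℝ} (hq0 : 0 < q) (hq1 : q < 1) : Summable (uR q) :=
  Summable.of_nonneg_of_le (uR_nonneg hq0 hq1) (uR_le hq0 hq1)
    (summable_geometric_of_lt_one hq0.le hq1)

lemma telescope {q : ℝ} (hq0 : 0 < q) (hq1 : q < 1) (k m : ℕ) :
    ∑' i : ℕ, (uR q (i + (k+1)) - uR q (i + (k+1) + m)) = ∑ j ∈ Finset.range m, uR q (j + (k+1)) := by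
  have hs : Summable (fun i => uR q (i + (k+1))) := (summable_nat_add_iff (k+1)).2 (summable_uR hq0 hq1)
  have hs2 : Summable (fun i => uR q (i + (k+1) + m)) := by
    have h := (summable_nat_add_iff (f := fun i => uR q (i + (k+1))) m).2 hs
    apply h.congr; intro i; congr 1; omega
  rw [Summable.tsum_sub hs hs2]
  have := Summable.sum_add_tsum_nat_add (f := fun i => uR q (i + (k+1))) m hs
  have he : ∑' i : ℕ, uR q (i + m + (k+1)) = ∑' i : ℕ, uR q (i + (k+1) + m) := by
    apply tsum_congr; intro i; congr 1; omega
  rw [he] at this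
  linarith [this]

noncomputable def gE (q : ℝ) (a : ℕ) : ℝ≥0∞ := ENNReal.ofReal (q ^ a / qnum q a)
noncomputable def hE (q : ℝ) (a : ℕ) : ℝ≥0∞ := ENNReal.ofReal (1 / qnum q a)

/-- equiv of ℕ with naturals above k -/
def natEquiv (k : ℕ) : ℕ ≃ {b : ℕ // k < b} where
  toFun i := ⟨i + (k+1), by omega⟩
  invFun b := b.1 - (k+1)
  left_inv i := by simp
  right_inv b := by ext; have := b.2; simp; omega

lemma Icc_sum_eq {M : Type*} [AddCommMonoid M] (m : ℕ) (f : ℕ → M) :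
    ∑ c ∈ Finset.Icc 1 m, f c = ∑ j ∈ Finset.range m, f (j + 1) := by
  have : Finset.Icc 1 m = Finset.Ico 1 (m+1) := by rw [Finset.Ico_add_one_right_eq_Icc]
  rw [this, Finset.sum_Ico_eq_sum_range]
  simp [Nat.add_comm]

/-- Key ENNReal lemma -/
lemma keyE {q : ℝ} (hq0 : 0 < q) (hq1 : q < 1) {m : ℕ} (hm : 1 ≤ m) (k : ℕ) :
    (∑' b : {b : ℕ // k < b}, hE q b * gE q (m + b))
      = gE q m * ∑ c ∈ Finset.Icc 1 m, gE q (c + k) := by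
  rw [← Equiv.tsum_eq (natEquiv k) (fun b => hE q b.1 * gE q (m + b.1))]
  have hterm : ∀ i : ℕ, hE q ((natEquiv k i).1) * gE q (m + (natEquiv k i).1)
      = ENNReal.ofReal ((1 / qnum q (i + (k+1))) * (q ^ (m + (i + (k+1))) / qnum q (m + (i + (k+1))))) := by
    intro i
    rw [ENNReal.ofReal_mul (one_div_nonneg.2 (qnum_nonneg hq0 hq1 _))]
    rfl
  simp only [hterm]
  have hnn : ∀ i : ℕ, 0 ≤ (1 / qnum q (i + (k+1))) * (q ^ (m + (i + (k+1))) / qnum q (m + (i + (k+1)))) := by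
    intro i
    exact mul_nonneg (one_div_nonneg.2 (qnum_nonneg hq0 hq1 _)) (uR_nonneg hq0 hq1 _)
  have hsum : Summable (fun i : ℕ => (1 / qnum q (i + (k+1))) * (q ^ (m + (i + (k+1))) / qnum q (m + (i + (k+1))))) := by
    apply Summable.of_nonneg_of_le hnn (f := fun i => q ^ (m + (i + (k+1))))
    · intro i
      have h1 : 1 / qnum q (i + (k+1)) ≤ 1 := by
        rw [div_le_one (lt_of_lt_of_le one_pos (one_le_qnum hq0 hq1 (by omega)))]
        exact one_le_qnum hq0 hq1 (by omega)
      have h2 : q ^ (m + (i + (k+1))) / qnum q (m + (i + (k+1))) ≤ q ^ (m + (i + (k+1))) := uR_le hq0 hq1 _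
      have h2n : 0 ≤ q ^ (m + (i + (k+1))) / qnum q (m + (i + (k+1))) := uR_nonneg hq0 hq1 _
      calc (1 / qnum q (i + (k+1))) * (q ^ (m + (i + (k+1))) / qnum q (m + (i + (k+1))))
          ≤ 1 * (q ^ (m + (i + (k+1)))) := by
            apply mul_le_mul h1 h2 h2n one_pos.le
        _ = q ^ (m + (i + (k+1))) := one_mul _
    · apply Summable.of_nonneg_of_le (fun i => pow_nonneg hq0.le _) (f := fun i => q ^ m * q ^ i)
      · intro i
        rw [pow_add]
        apply mul_le_mul_of_nonneg_left _ (pow_nonneg hq0.le m)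
        calc q ^ (i + (k+1)) ≤ q ^ i := pow_le_pow_of_le_one hq0.le hq1.le (by omega)
          _ = q ^ i := rfl
      · exact (summable_geometric_of_lt_one hq0.le hq1).mul_left _
  rw [← ENNReal.ofReal_tsum_of_nonneg hnn hsum]
  have hts : ∑' i : ℕ, (1 / qnum q (i + (k+1))) * (q ^ (m + (i + (k+1))) / qnum q (m + (i + (k+1))))
      = (q ^ m / qnum q m) * ∑ c ∈ Finset.Icc 1 m, (q ^ (c + k) / qnum q (c + k)) := by
    have : ∀ i : ℕ, (1 / qnum q (i + (k+1))) * (q ^ (m + (i + (k+1))) / qnum q (m + (i + (k+1))))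
        = (q ^ m / qnum q m) * (uR q (i + (k+1)) - uR q (i + (k+1) + m)) := by
      intro i
      rw [key_real hq0 hq1 (by omega : 1 ≤ i + (k+1)) hm]
      have hmb : m + (i + (k+1)) = i + (k+1) + m := by omega
      simp only [uR, hmb]
    rw [tsum_congr this, tsum_mul_left, telescope hq0 hq1 k m]
    congr 1
    rw [Icc_sum_eq m (fun c => q ^ (c + k) / qnum q (c + k))]
    apply Finset.sum_congr rfl
    intro j _
    have : j + 1 + k = j + (k + 1) := by omega
    rw [this]; rfl
  rw [hts, ENNReal.ofReal_mul (div_nonneg (pow_nonneg hq0.le m) (qnum_nonneg hq0 hq1 m)),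
    ENNReal.ofReal_sum_of_nonneg (fun i _ => div_nonneg (pow_nonneg hq0.le _) (qnum_nonneg hq0 hq1 _))]
  rfl

noncomputable def Ae (q : ℝ) (m : ℕ) : ℕ → ℕ → ℝ≥0∞
  | 0, k => gE q (m + k)
  | n+1, k => ∑' b : {b : ℕ // k < b}, hE q b * Ae q m n b

noncomputable def Se (q : ℝ) : ℕ → ℕ → ℕ → ℝ≥0∞
  | 0, m, k => ∑ c ∈ Finset.Icc 1 m, gE q (c + k)
  | n+1, m, k => ∑ c ∈ Finset.Icc 1 m, gE q c * Se q n c k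

lemma Se_step {q : ℝ} (hq0 : 0 < q) (hq1 : q < 1) :
    ∀ n m k : ℕ, (∑' b : {b : ℕ // k < b}, hE q b * Se q n m b) = Se q (n+1) m k := by
  intro n
  induction n with
  | zero =>
    intro m k
    simp only [Se]
    calc (∑' b : {b : ℕ // k < b}, hE q b * ∑ c ∈ Finset.Icc 1 m, gE q (c + b.1))
        = ∑' b : {b : ℕ // k < b}, ∑ c ∈ Finset.Icc 1 m, hE q b * gE q (c + b.1) := by
          exact tsum_congr fun b => Finset.mul_sum _ _ _
      _ = ∑ c ∈ Finset.Icc 1 m, ∑' b : {b : ℕ // k < b}, hE q b * gE q (c + b.1) := by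
          exact Summable.tsum_finsetSum fun c _ => ENNReal.summable
      _ = ∑ c ∈ Finset.Icc 1 m, gE q c * Se q 0 c k := by
          refine Finset.sum_congr rfl fun c hc => ?_
          rw [keyE hq0 hq1 (Finset.mem_Icc.1 hc).1 k]
          rfl
  | succ n ih =>
    intro m k
    simp only [Se]
    calc (∑' b : {b : ℕ // k < b}, hE q b * ∑ c ∈ Finset.Icc 1 m, gE q c * Se q n c b.1)
        = ∑' b : {b : ℕ // k < b}, ∑ c ∈ Finset.Icc 1 m, gE q c * (hE q b * Se q n c b.1) := by
          refine tsum_congr fun b => ?_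
          rw [Finset.mul_sum]
          exact Finset.sum_congr rfl fun c _ => by ring
      _ = ∑ c ∈ Finset.Icc 1 m, ∑' b : {b : ℕ // k < b}, gE q c * (hE q b * Se q n c b.1) := by
          exact Summable.tsum_finsetSum fun c _ => ENNReal.summable
      _ = ∑ c ∈ Finset.Icc 1 m, gE q c * Se q (n+1) c k := by
          refine Finset.sum_congr rfl fun c hc => ?_
          rw [ENNReal.tsum_mul_left, ih c k]

lemma Ae_eq {q : ℝ} (hq0 : 0 < q) (hq1 : q < 1) {m : ℕ} (hm : 1 ≤ m) :
    ∀ n k : ℕ, Ae q m (n+1) k = gE q m * Se q n m k := by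
  intro n
  induction n with
  | zero =>
    intro k
    simp only [Ae, Se]
    exact keyE hq0 hq1 hm k
  | succ n ih =>
    intro k
    calc Ae q m (n+2) k = ∑' b : {b : ℕ // k < b}, hE q b * Ae q m (n+1) b := rfl
      _ = ∑' b : {b : ℕ // k < b}, gE q m * (hE q b * Se q n m b.1) := by
          refine tsum_congr fun b => ?_
          rw [ih b.1]; ring
      _ = gE q m * Se q (n+1) m k := by
          rw [ENNReal.tsum_mul_left, Se_step hq0 hq1 n m k]

lemma erase_last_eq (N : ℕ) : (Finset.univ : Finset (Fin (N+1))).erase (Fin.last N)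
    = Finset.Iio (Fin.last N) := by
  ext j
  simp [Finset.mem_erase, Fin.lt_iff_val_lt_val, Fin.ext_iff, Fin.last]
  omega

lemma prod_erase_last {M : Type*} [CommMonoid M] (N : ℕ) (f : Fin (N+1) → M) :
    ∏ j ∈ (Finset.univ : Finset (Fin (N+1))).erase (Fin.last N), f j
      = ∏ j : Fin N, f (Fin.castSucc j) := by
  rw [erase_last_eq, Fin.Iio_last_eq_map, Finset.prod_map]
  rfl

/-- Peel the last (smallest) coordinate of a strictly decreasing tuple. -/
def peelA (n k : ℕ) :
    {b : Fin (n+2) → ℕ // (∀ i j, i < j → b j < b i) ∧ ∀ j, k < b j}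
      ≃ Σ x : {x : ℕ // k < x}, {c : Fin (n+1) → ℕ // (∀ i j, i < j → c j < c i) ∧ ∀ j, x.1 < c j} where
  toFun b := ⟨⟨b.1 (Fin.last (n+1)), b.2.2 _⟩,
    ⟨Fin.init b.1,
      fun i j hij => b.2.1 _ _ (by rwa [Fin.castSucc_lt_castSucc_iff]),
      fun j => b.2.1 _ _ (Fin.castSucc_lt_last j)⟩⟩
  invFun p := ⟨Fin.snoc p.2.1 p.1.1, by
    constructor
    · intro i j hij
      rcases Fin.eq_castSucc_or_eq_last j with ⟨j', rfl⟩ | rfl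
      · rcases Fin.eq_castSucc_or_eq_last i with ⟨i', rfl⟩ | rfl
        · rw [Fin.snoc_castSucc, Fin.snoc_castSucc]
          exact p.2.2.1 _ _ (by rwa [Fin.castSucc_lt_castSucc_iff] at hij)
        · exact absurd hij (asymm (Fin.castSucc_lt_last j'))
      · rcases Fin.eq_castSucc_or_eq_last i with ⟨i', rfl⟩ | rfl
        · rw [Fin.snoc_castSucc, Fin.snoc_last]
          exact p.2.2.2 i'
        · exact absurd hij (lt_irrefl _)
    · intro j
      rcases Fin.eq_castSucc_or_eq_last j with ⟨j', rfl⟩ | rfl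
      · rw [Fin.snoc_castSucc]
        exact lt_trans p.1.2 (p.2.2.2 j')
      · rw [Fin.snoc_last]; exact p.1.2⟩
  left_inv b := by
    apply Subtype.ext
    exact Fin.snoc_init_self b.1
  right_inv p := by
    rcases p with ⟨⟨x, hx⟩, ⟨c, hc⟩⟩
    simp only [Fin.snoc_last, Fin.init_snoc]
    have hv : (Fin.snoc c x : Fin (n+2) → ℕ) (Fin.last (n+1)) = x := by simp
    refine Sigma.ext (Subtype.ext hv) ((Subtype.heq_iff_coe_eq ?_).2 rfl)
    intro c'
    simp only [hv]


/-- one-variable strictly decreasing tuples -/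
def oneEquiv (k : ℕ) : {b : Fin 1 → ℕ // (∀ i j, i < j → b j < b i) ∧ ∀ j, k < b j}
    ≃ {x : ℕ // k < x} where
  toFun b := ⟨b.1 0, b.2.2 0⟩
  invFun x := ⟨fun _ => x.1, ⟨fun i j hij => absurd (Subsingleton.elim i j) (ne_of_lt hij), fun _ => x.2⟩⟩
  left_inv b := by
    apply Subtype.ext; funext j
    exact congrArg b.1 (Subsingleton.elim 0 j)
  right_inv x := rfl

lemma Atuple (q : ℝ) (m : ℕ) : ∀ n k : ℕ,
    (∑' b : {b : Fin (n+1) → ℕ // (∀ i j, i < j → b j < b i) ∧ ∀ j, k < b j},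
        gE q (m + b.1 0) * ∏ j, hE q (b.1 j)) = Ae q m (n+1) k := by
  intro n
  induction n with
  | zero =>
    intro k
    rw [← Equiv.tsum_eq (oneEquiv k).symm
      (fun b : {b : Fin 1 → ℕ // (∀ i j, i < j → b j < b i) ∧ ∀ j, k < b j} =>
        gE q (m + b.1 0) * ∏ j, hE q (b.1 j))]
    show _ = ∑' x : {x : ℕ // k < x}, hE q x.1 * gE q (m + x.1)
    refine tsum_congr fun x => ?_
    show gE q (m + x.1) * ∏ j : Fin 1, hE q x.1 = _
    rw [Fin.prod_univ_one, mul_comm]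
  | succ n ih =>
    intro k
    rw [← Equiv.tsum_eq (peelA n k).symm
      (fun b : {b : Fin (n+2) → ℕ // (∀ i j, i < j → b j < b i) ∧ ∀ j, k < b j} =>
        gE q (m + b.1 0) * ∏ j, hE q (b.1 j))]
    rw [ENNReal.tsum_sigma']
    show (∑' (x : {x : ℕ // k < x}) (c : {c : Fin (n+1) → ℕ //
        (∀ i j, i < j → c j < c i) ∧ ∀ j, x.1 < c j}),
        gE q (m + (Fin.snoc c.1 x.1 : Fin (n+2) → ℕ) 0) *
          ∏ j, hE q ((Fin.snoc c.1 x.1 : Fin (n+2) → ℕ) j)) = Ae q m (n+2) k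
    have hterm : ∀ (x : {x : ℕ // k < x}) (c : {c : Fin (n+1) → ℕ //
        (∀ i j, i < j → c j < c i) ∧ ∀ j, x.1 < c j}),
        gE q (m + (Fin.snoc c.1 x.1 : Fin (n+2) → ℕ) 0) *
          ∏ j, hE q ((Fin.snoc c.1 x.1 : Fin (n+2) → ℕ) j)
        = hE q x.1 * (gE q (m + c.1 0) * ∏ j, hE q (c.1 j)) := by
      intro x c
      have h0 : (Fin.snoc c.1 x.1 : Fin (n+2) → ℕ) 0 = c.1 0 := by
        rw [← Fin.castSucc_zero, Fin.snoc_castSucc]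
      have hp : (∏ j, hE q ((Fin.snoc c.1 x.1 : Fin (n+2) → ℕ) j))
          = (∏ j : Fin (n+1), hE q (c.1 j)) * hE q x.1 := by
        rw [Fin.prod_univ_castSucc]
        simp only [Fin.snoc_castSucc, Fin.snoc_last]
      rw [h0, hp]; ring
    calc (∑' (x : {x : ℕ // k < x}) (c : {c : Fin (n+1) → ℕ //
        (∀ i j, i < j → c j < c i) ∧ ∀ j, x.1 < c j}),
        gE q (m + (Fin.snoc c.1 x.1 : Fin (n+2) → ℕ) 0) *
          ∏ j, hE q ((Fin.snoc c.1 x.1 : Fin (n+2) → ℕ) j))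
        = ∑' (x : {x : ℕ // k < x}), hE q x.1 * ∑' (c : {c : Fin (n+1) → ℕ //
            (∀ i j, i < j → c j < c i) ∧ ∀ j, x.1 < c j}),
            (gE q (m + c.1 0) * ∏ j, hE q (c.1 j)) := by
          refine tsum_congr fun x => ?_
          rw [← ENNReal.tsum_mul_left]
          exact tsum_congr fun c => hterm x c
      _ = ∑' (x : {x : ℕ // k < x}), hE q x.1 * Ae q m (n+1) x.1 := by
          exact tsum_congr fun x => by rw [ih x.1]
      _ = Ae q m (n+2) k := rfl

/-- one-variable weakly decreasing bounded tuples -/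
def oneEquivS (m : ℕ) : {c : Fin 1 → ℕ // (∀ i j, i ≤ j → c j ≤ c i) ∧ ∀ j, 1 ≤ c j ∧ c j ≤ m}
    ≃ {x : ℕ // 1 ≤ x ∧ x ≤ m} where
  toFun c := ⟨c.1 0, c.2.2 0⟩
  invFun x := ⟨fun _ => x.1, fun i j _ => le_refl _, fun _ => x.2⟩
  left_inv c := Subtype.ext (funext fun j => congrArg c.1 (Subsingleton.elim 0 j))
  right_inv x := rfl

/-- peel the first (largest) coordinate of a weakly decreasing bounded tuple -/
def peelS (n m : ℕ) :
    {c : Fin (n+2) → ℕ // (∀ i j, i ≤ j → c j ≤ c i) ∧ ∀ j, 1 ≤ c j ∧ c j ≤ m}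
      ≃ Σ x : {x : ℕ // 1 ≤ x ∧ x ≤ m},
          {c : Fin (n+1) → ℕ // (∀ i j, i ≤ j → c j ≤ c i) ∧ ∀ j, 1 ≤ c j ∧ c j ≤ x.1} where
  toFun c := ⟨⟨c.1 0, (c.2.2 0).1, (c.2.2 0).2⟩,
    ⟨Fin.tail c.1,
      fun i j hij => c.2.1 i.succ j.succ (by rwa [Fin.succ_le_succ_iff]),
      fun j => ⟨(c.2.2 j.succ).1, c.2.1 0 j.succ (Fin.zero_le _)⟩⟩⟩
  invFun p := ⟨Fin.cons p.1.1 p.2.1, by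
    constructor
    · intro i j hij
      induction i using Fin.cases with
      | zero =>
        induction j using Fin.cases with
        | zero => exact le_refl _
        | succ j' => simpa using (p.2.2.2 j').2
      | succ i' =>
        induction j using Fin.cases with
        | zero => exact absurd hij (by simp [Fin.le_def])
        | succ j' =>
          simp only [Fin.cons_succ]
          exact p.2.2.1 i' j' (by rwa [← Fin.succ_le_succ_iff])
    · intro j
      induction j using Fin.cases with
      | zero => exact ⟨p.1.2.1, p.1.2.2⟩
      | succ j' =>
        simp only [Fin.cons_succ]
        exact ⟨(p.2.2.2 j').1, le_trans (p.2.2.2 j').2 p.1.2.2⟩⟩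
  left_inv c := Subtype.ext (Fin.cons_self_tail c.1)
  right_inv p := by
    rcases p with ⟨⟨x, hx⟩, ⟨c, hc⟩⟩
    simp only [Fin.cons_zero, Fin.tail_cons]
    have hv : (Fin.cons x c : Fin (n+2) → ℕ) 0 = x := rfl
    refine Sigma.ext (Subtype.ext hv) ((Subtype.heq_iff_coe_eq ?_).2 rfl)
    intro c'
    simp only [hv]

lemma tsum_Icc_subtype (f : ℕ → ℝ≥0∞) (m : ℕ) :
    ∑' x : {x : ℕ // 1 ≤ x ∧ x ≤ m}, f x.1 = ∑ c ∈ Finset.Icc 1 m, f c := by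
  rw [← Finset.tsum_subtype]
  exact Equiv.tsum_eq (Equiv.subtypeEquivRight (fun x => by simp [Finset.mem_Icc]))
    (fun b : {x : ℕ // x ∈ Finset.Icc 1 m} => f b.1)

lemma Stuple (q : ℝ) : ∀ n m k : ℕ,
    (∑' c : {c : Fin (n+1) → ℕ // (∀ i j, i ≤ j → c j ≤ c i) ∧ ∀ j, 1 ≤ c j ∧ c j ≤ m},
        gE q (c.1 (Fin.last n) + k) *
          ∏ j ∈ (Finset.univ : Finset (Fin (n+1))).erase (Fin.last n), gE q (c.1 j))
      = Se q n m k := by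
  intro n
  induction n with
  | zero =>
    intro m k
    have h1 : ∀ c : {c : Fin 1 → ℕ // (∀ i j, i ≤ j → c j ≤ c i) ∧ ∀ j, 1 ≤ c j ∧ c j ≤ m},
        gE q (c.1 (Fin.last 0) + k) *
          ∏ j ∈ (Finset.univ : Finset (Fin 1)).erase (Fin.last 0), gE q (c.1 j)
        = gE q (c.1 0 + k) := by
      intro c
      rw [prod_erase_last]
      simp
    rw [tsum_congr h1]
    rw [← Equiv.tsum_eq (oneEquivS m).symm (fun c : {c : Fin 1 → ℕ // (∀ i j, i ≤ j → c j ≤ c i)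
        ∧ ∀ j, 1 ≤ c j ∧ c j ≤ m} => gE q (c.1 0 + k))]
    rw [show (∑' x : {x : ℕ // 1 ≤ x ∧ x ≤ m}, gE q (((oneEquivS m).symm x).1 0 + k))
        = ∑' x : {x : ℕ // 1 ≤ x ∧ x ≤ m}, gE q (x.1 + k) from tsum_congr fun x => rfl]
    rw [tsum_Icc_subtype (fun x => gE q (x + k)) m]
    rfl
  | succ n ih =>
    intro m k
    rw [← Equiv.tsum_eq (peelS n m).symm
      (fun c : {c : Fin (n+2) → ℕ // (∀ i j, i ≤ j → c j ≤ c i) ∧ ∀ j, 1 ≤ c j ∧ c j ≤ m} =>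
        gE q (c.1 (Fin.last (n+1)) + k) *
          ∏ j ∈ (Finset.univ : Finset (Fin (n+2))).erase (Fin.last (n+1)), gE q (c.1 j))]
    rw [ENNReal.tsum_sigma']
    have hterm : ∀ (x : {x : ℕ // 1 ≤ x ∧ x ≤ m}) (c : {c : Fin (n+1) → ℕ //
        (∀ i j, i ≤ j → c j ≤ c i) ∧ ∀ j, 1 ≤ c j ∧ c j ≤ x.1}),
        gE q ((Fin.cons x.1 c.1 : Fin (n+2) → ℕ) (Fin.last (n+1)) + k) *
          ∏ j ∈ (Finset.univ : Finset (Fin (n+2))).erase (Fin.last (n+1)),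
            gE q ((Fin.cons x.1 c.1 : Fin (n+2) → ℕ) j)
        = gE q x.1 * (gE q (c.1 (Fin.last n) + k) *
            ∏ j ∈ (Finset.univ : Finset (Fin (n+1))).erase (Fin.last n), gE q (c.1 j)) := by
      intro x c
      have hlast : (Fin.cons x.1 c.1 : Fin (n+2) → ℕ) (Fin.last (n+1)) = c.1 (Fin.last n) := by
        rw [← Fin.succ_last, Fin.cons_succ]
      have hprod : (∏ j ∈ (Finset.univ : Finset (Fin (n+2))).erase (Fin.last (n+1)),
            gE q ((Fin.cons x.1 c.1 : Fin (n+2) → ℕ) j))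
          = gE q x.1 * ∏ j ∈ (Finset.univ : Finset (Fin (n+1))).erase (Fin.last n), gE q (c.1 j) := by
        rw [prod_erase_last, prod_erase_last, Fin.prod_univ_succ]
        simp only [Fin.castSucc_zero, Fin.cons_zero, ← Fin.succ_castSucc, Fin.cons_succ]
      rw [hlast, hprod]; ring
    calc (∑' (x : {x : ℕ // 1 ≤ x ∧ x ≤ m}) (c : {c : Fin (n+1) → ℕ //
        (∀ i j, i ≤ j → c j ≤ c i) ∧ ∀ j, 1 ≤ c j ∧ c j ≤ x.1}),
        gE q ((Fin.cons x.1 c.1 : Fin (n+2) → ℕ) (Fin.last (n+1)) + k) *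
          ∏ j ∈ (Finset.univ : Finset (Fin (n+2))).erase (Fin.last (n+1)),
            gE q ((Fin.cons x.1 c.1 : Fin (n+2) → ℕ) j))
        = ∑' (x : {x : ℕ // 1 ≤ x ∧ x ≤ m}), gE q x.1 * Se q n x.1 k := by
          refine tsum_congr fun x => ?_
          rw [tsum_congr (hterm x), ENNReal.tsum_mul_left, ih x.1 k]
      _ = Se q (n+1) m k := by
          rw [tsum_Icc_subtype (fun x => gE q x * Se q n x k) m]
          rfl

end Helpers


/-- Closed form for the tail sums `A(m,n,k)`: the sum over strictly decreasing
`n`-tuples `b₁ > ⋯ > bₙ > k` of `(q^{m+b₁}/[m+b₁]) ∏ⱼ 1/[bⱼ]` equals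
`(q^m/[m])` times a sum over weakly decreasing tuples `m ≥ c₁ ≥ ⋯ ≥ cₙ ≥ 1`. -/
theorem q_tail_sum_general (q : ℝ) (hq0 : 0 < q) (hq1 : q < 1)
    (m n k : ℕ) (hm : 1 ≤ m) (hn : 1 ≤ n) :
    (∑' b : {b : Fin n → ℕ // (∀ i j : Fin n, i < j → b j < b i) ∧ ∀ j, k < b j},
        (q ^ (m + b.1 ⟨0, hn⟩) / qnum q (m + b.1 ⟨0, hn⟩)) *
          ∏ j : Fin n, 1 / qnum q (b.1 j))
      = (q ^ m / qnum q m) *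
          ∑' c : {c : Fin n → ℕ // (∀ i j : Fin n, i ≤ j → c j ≤ c i) ∧
              ∀ j, 1 ≤ c j ∧ c j ≤ m},
            (q ^ (c.1 ⟨n - 1, Nat.sub_lt hn Nat.one_pos⟩ + k) /
                qnum q (c.1 ⟨n - 1, Nat.sub_lt hn Nat.one_pos⟩ + k)) *
              ∏ j ∈ Finset.univ.erase (⟨n - 1, Nat.sub_lt hn Nat.one_pos⟩ : Fin n),
                q ^ (c.1 j) / qnum q (c.1 j) := by
  obtain ⟨N, rfl⟩ : ∃ N, n = N + 1 := ⟨n - 1, by omega⟩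
  have h0 : (⟨0, hn⟩ : Fin (N+1)) = 0 := by
    apply Fin.ext; simp
  have hlast : (⟨N + 1 - 1, Nat.sub_lt hn Nat.one_pos⟩ : Fin (N+1)) = Fin.last N := by
    apply Fin.ext; simp [Fin.last]
  simp only [h0, hlast]
  have hfin1 : ∀ b : {b : Fin (N+1) → ℕ // (∀ i j, i < j → b j < b i) ∧ ∀ j, k < b j},
      gE q (m + b.1 0) * ∏ j, hE q (b.1 j) ≠ ∞ :=
    fun b => ENNReal.mul_ne_top ENNReal.ofReal_ne_top
      (ENNReal.prod_ne_top fun j _ => ENNReal.ofReal_ne_top)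
  have hfin2 : ∀ c : {c : Fin (N+1) → ℕ // (∀ i j, i ≤ j → c j ≤ c i) ∧ ∀ j, 1 ≤ c j ∧ c j ≤ m},
      gE q (c.1 (Fin.last N) + k) *
        ∏ j ∈ (Finset.univ : Finset (Fin (N+1))).erase (Fin.last N), gE q (c.1 j) ≠ ∞ :=
    fun c => ENNReal.mul_ne_top ENNReal.ofReal_ne_top
      (ENNReal.prod_ne_top fun j _ => ENNReal.ofReal_ne_top)
  have hL : (∑' b : {b : Fin (N+1) → ℕ // (∀ i j, i < j → b j < b i) ∧ ∀ j, k < b j},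
      (q ^ (m + b.1 0) / qnum q (m + b.1 0)) * ∏ j : Fin (N+1), 1 / qnum q (b.1 j))
      = (Ae q m (N+1) k).toReal := by
    rw [← Atuple q m N k, ENNReal.tsum_toReal_eq hfin1]
    refine tsum_congr fun b => ?_
    rw [ENNReal.toReal_mul, ENNReal.toReal_prod]
    simp only [gE, hE]
    rw [ENNReal.toReal_ofReal (div_nonneg (pow_nonneg hq0.le _) (qnum_nonneg hq0 hq1 _))]
    congr 1
    exact Finset.prod_congr rfl fun j _ =>
      (ENNReal.toReal_ofReal (one_div_nonneg.2 (qnum_nonneg hq0 hq1 _))).symm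
  have hR : (∑' c : {c : Fin (N+1) → ℕ // (∀ i j, i ≤ j → c j ≤ c i) ∧ ∀ j, 1 ≤ c j ∧ c j ≤ m},
      (q ^ (c.1 (Fin.last N) + k) / qnum q (c.1 (Fin.last N) + k)) *
        ∏ j ∈ (Finset.univ : Finset (Fin (N+1))).erase (Fin.last N),
          q ^ (c.1 j) / qnum q (c.1 j))
      = (Se q N m k).toReal := by
    rw [← Stuple q N m k, ENNReal.tsum_toReal_eq hfin2]
    refine tsum_congr fun c => ?_
    rw [ENNReal.toReal_mul, ENNReal.toReal_prod]
    simp only [gE]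
    rw [ENNReal.toReal_ofReal (div_nonneg (pow_nonneg hq0.le _) (qnum_nonneg hq0 hq1 _))]
    congr 1
    exact Finset.prod_congr rfl fun j _ =>
      (ENNReal.toReal_ofReal (div_nonneg (pow_nonneg hq0.le _) (qnum_nonneg hq0 hq1 _))).symm
  rw [hL, hR, Ae_eq hq0 hq1 hm N k, ENNReal.toReal_mul]
  congr 1
  exact ENNReal.toReal_ofReal (div_nonneg (pow_nonneg hq0.le _) (qnum_nonneg hq0 hq1 _))
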